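/- arXiv:1604.02161 — 2 statements merged into one kernel-verified Lean document; each statement's English description precedes it below -/
import Mathlib

section
/- Let (X,d) be a metric space, Y ⊂ X a subset identified isometrically with the β-snowflake line restricted to [0,1] for some β ∈ (0,1), and γ : I → X a rectifiable curve of length L whose image contains the points 0 and 1 of Y. If (a_j, b_j), j ∈ ℕ, are the disjoint open intervals forming [0,1] \ (im(γ) ∩ Y) with all endpoints a_j, b_j in im(γ) ∩ Y, then ∑_{j=1}^∞ |b_j − a_j|^β ≤ L. -/
open Set MeasureTheory

private lemma image_card_le_changes (g : ℕ → ℕ) (n : ℕ) :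
    ((Finset.range (n+1)).image g).card ≤
      1 + ((Finset.range n).filter fun i => g i ≠ g (i+1)).card := by
  induction n with
  | zero => simp
  | succ n ih =>
    rw [Finset.range_add_one (n := n+1), Finset.image_insert]
    by_cases h : g (n+1) ∈ (Finset.range (n+1)).image g
    · rw [Finset.insert_eq_self.mpr h]
      refine ih.trans ?_
      have hsub : ((Finset.range n).filter fun i => g i ≠ g (i+1)) ⊆
          ((Finset.range (n+1)).filter fun i => g i ≠ g (i+1)) :=
        Finset.filter_subset_filter _ (Finset.range_subset_range.mpr (by omega))
      have := Finset.card_le_card hsub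
      omega
    · have hgn : g n ≠ g (n+1) := by
        intro hEq
        exact h (by rw [← hEq]; exact Finset.mem_image_of_mem g (by simp))
      have h1 : ((Finset.range (n+1)).filter fun i => g i ≠ g (i+1)) =
          insert n ((Finset.range n).filter fun i => g i ≠ g (i+1)) := by
        rw [Finset.range_add_one, Finset.filter_insert, if_pos hgn]
      have h2 : n ∉ (Finset.range n).filter fun i => g i ≠ g (i+1) := by simp
      have h3 := Finset.card_insert_of_notMem h2
      have h4 := Finset.card_insert_le (g (n+1)) ((Finset.range (n+1)).image g)
      rw [h1, h3]
      omega

/-- Let `Y ⊂ X` be identified isometrically (via `e`) with the β-snowflake line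
restricted to `[0,1]`, and let `γ : [c,d] → X` be a rectifiable curve whose image
contains the points `e 0` and `e 1`.  If `(a j, b j)` are the disjoint open
intervals forming `[0,1] \ (im γ ∩ Y)`, with all endpoints in `im γ ∩ Y`, then
`∑ⱼ |b j − a j|^β` is at most the length of `γ`. -/
theorem stmt_3 {X : Type*} [MetricSpace X]
    (β : ℝ) (hβ : β ∈ Set.Ioo (0 : ℝ) 1) (e : ℝ → X)
    (he : ∀ s ∈ Set.Icc (0 : ℝ) 1, ∀ t ∈ Set.Icc (0 : ℝ) 1,
      dist (e s) (e t) = |s - t| ^ β)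
    (c d L : ℝ) (γ : ℝ → X) (hcont : ContinuousOn γ (Set.Icc c d))
    (hlen : eVariationOn γ (Set.Icc c d) = ENNReal.ofReal L)
    (h0 : e 0 ∈ γ '' Set.Icc c d) (h1 : e 1 ∈ γ '' Set.Icc c d)
    (a b : ℕ → ℝ) (hab : ∀ j, a j < b j)
    (hdisj : Pairwise (Function.onFun Disjoint fun j => Set.Ioo (a j) (b j)))
    (hunion : (⋃ j, Set.Ioo (a j) (b j)) =
      Set.Icc (0 : ℝ) 1 \ {t | e t ∈ γ '' Set.Icc c d})
    (hend : ∀ j, e (a j) ∈ γ '' Set.Icc c d ∧ e (b j) ∈ γ '' Set.Icc c d) :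
    ∑' j : ℕ, ENNReal.ofReal ((b j - a j) ^ β) ≤ ENNReal.ofReal L := by
  classical
  obtain ⟨hβ0, hβ1⟩ := hβ
  -- e is injective on [0,1]
  have einj : ∀ s ∈ Set.Icc (0:ℝ) 1, ∀ t ∈ Set.Icc (0:ℝ) 1, e s = e t → s = t := by
    intro s hs t ht hst
    have h := he s hs t ht
    rw [hst, dist_self] at h
    by_contra hne
    have hpos : (0:ℝ) < |s - t| := abs_pos.mpr (sub_ne_zero.mpr hne)
    have := Real.rpow_pos_of_pos hpos β
    rw [← h] at this
    exact lt_irrefl 0 this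
  -- gap endpoints lie in [0,1]
  have hmem01 : ∀ j, a j ∈ Set.Icc (0:ℝ) 1 ∧ b j ∈ Set.Icc (0:ℝ) 1 := by
    intro j
    have hsub : Set.Ioo (a j) (b j) ⊆ Set.Icc (0:ℝ) 1 := by
      intro x hx
      have hx2 : x ∈ ⋃ j, Set.Ioo (a j) (b j) := Set.mem_iUnion.mpr ⟨j, hx⟩
      rw [hunion] at hx2
      exact hx2.1
    have ha0 : 0 ≤ a j := by
      by_contra hc
      push_neg at hc
      have hm : a j < min (b j) 0 := lt_min (hab j) hc
      have hx : (a j + min (b j) 0)/2 ∈ Set.Icc (0:ℝ) 1 := hsub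
        ⟨by linarith, by have := min_le_left (b j) 0; linarith⟩
      have := min_le_right (b j) 0
      linarith [hx.1]
    have hb1 : b j ≤ 1 := by
      by_contra hc
      push_neg at hc
      have hm : max (a j) 1 < b j := max_lt (hab j) hc
      have hx : (max (a j) 1 + b j)/2 ∈ Set.Icc (0:ℝ) 1 := hsub
        ⟨by have := le_max_left (a j) 1; linarith, by linarith⟩
      have := le_max_right (a j) 1
      linarith [hx.2]
    exact ⟨⟨ha0, by linarith [hab j]⟩, ⟨by linarith [hab j], hb1⟩⟩
  -- visited snowflake-parameters are not in any gap
  have hnotgap : ∀ s, s ∈ Set.Icc (0:ℝ) 1 → e s ∈ γ '' Set.Icc c d →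
      ∀ j, s ∉ Set.Ioo (a j) (b j) := by
    intro s hs01 hsim j hmem
    have hs2 : s ∈ ⋃ j, Set.Ioo (a j) (b j) := Set.mem_iUnion.mpr ⟨j, hmem⟩
    rw [hunion] at hs2
    exact hs2.2 hsim
  rw [ENNReal.tsum_eq_iSup_sum]
  refine iSup_le fun J => ?_
  rcases J.eq_empty_or_nonempty with rfl | hJne
  · simp
  have hendu := fun j => (hend j).1
  have hendv := fun j => (hend j).2
  simp only [Set.mem_image] at hendu hendv
  choose u hu hgu using hendu
  choose v hv hgv using hendv
  set T : Finset ℝ := J.image u ∪ J.image v with hT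
  have hTne : T.Nonempty := by
    obtain ⟨j, hj⟩ := hJne
    exact ⟨u j, Finset.mem_union_left _ (Finset.mem_image_of_mem u hj)⟩
  set n : ℕ := T.card - 1 with hn
  have hcard : T.card = n + 1 := by
    have := Finset.card_pos.mpr hTne
    omega
  set ι := T.orderIsoOfFin hcard with hι
  have hτlt : ∀ i : ℕ, min i n < n + 1 := fun i => by omega
  set τ : ℕ → ℝ := fun i => (ι ⟨min i n, hτlt i⟩ : ℝ) with hτ
  have hτT : ∀ i, τ i ∈ T := fun i => (ι ⟨min i n, hτlt i⟩).2
  have hτmono : Monotone τ := by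
    intro i j hij
    have hle : (⟨min i n, hτlt i⟩ : Fin (n+1)) ≤ ⟨min j n, hτlt j⟩ := by
      simp only [Fin.mk_le_mk]
      omega
    exact Subtype.coe_le_coe.mpr (ι.monotone hle)
  have hτmem : ∀ i, τ i ∈ Set.Icc c d := by
    intro i
    rcases Finset.mem_union.mp (hτT i) with h | h <;>
      obtain ⟨j, hj, hju⟩ := Finset.mem_image.mp h
    · rw [← hju]; exact hu j
    · rw [← hju]; exact hv j
  have hexS : ∀ i : ℕ, ∃ s, (s ∈ Set.Icc (0:ℝ) 1 ∧ e s ∈ γ '' Set.Icc c d) ∧ γ (τ i) = e s := by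
    intro i
    rcases Finset.mem_union.mp (hτT i) with h | h <;>
      obtain ⟨j, hj, hju⟩ := Finset.mem_image.mp h
    · exact ⟨a j, ⟨(hmem01 j).1, (hend j).1⟩, by rw [← hju, hgu]⟩
    · exact ⟨b j, ⟨(hmem01 j).2, (hend j).2⟩, by rw [← hju, hgv]⟩
  choose S hS hγS using hexS
  have hSgap : ∀ i j, S i ∉ Set.Ioo (a j) (b j) :=
    fun i j => hnotgap _ (hS i).1 (hS i).2 j
  -- the walk visits every gap endpoint
  have hvisita : ∀ j ∈ J, ∃ i ≤ n, S i = a j := by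
    intro j hj
    have hmem : u j ∈ T := Finset.mem_union_left _ (Finset.mem_image_of_mem u hj)
    obtain ⟨k, hk⟩ := ι.surjective ⟨u j, hmem⟩
    refine ⟨k.1, by have := k.isLt; omega, ?_⟩
    have hmin : (⟨min k.1 n, hτlt k.1⟩ : Fin (n+1)) = k :=
      Fin.ext (by have := k.isLt; simp; omega)
    have hτk : τ k.1 = u j := by
      rw [hτ]
      simp only [hmin, hk]
    have heq : e (S k.1) = e (a j) := by
      rw [← hγS k.1, hτk, hgu]
    exact einj _ (hS k.1).1 _ (hmem01 j).1 heq
  have hvisitb : ∀ j ∈ J, ∃ i ≤ n, S i = b j := by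
    intro j hj
    have hmem : v j ∈ T := Finset.mem_union_right _ (Finset.mem_image_of_mem v hj)
    obtain ⟨k, hk⟩ := ι.surjective ⟨v j, hmem⟩
    refine ⟨k.1, by have := k.isLt; omega, ?_⟩
    have hmin : (⟨min k.1 n, hτlt k.1⟩ : Fin (n+1)) = k :=
      Fin.ext (by have := k.isLt; simp; omega)
    have hτk : τ k.1 = v j := by
      rw [hτ]
      simp only [hmin, hk]
    have heq : e (S k.1) = e (b j) := by
      rw [← hγS k.1, hτk, hgv]
    exact einj _ (hS k.1).1 _ (hmem01 j).2 heq
  -- the family of steps crossing a given gap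
  set r : {x // x ∈ J} → Finset ℕ := fun j =>
    (Finset.range n).filter fun i =>
      (S i ≤ a j.1 ∧ b j.1 ≤ S (i+1)) ∨ (S (i+1) ≤ a j.1 ∧ b j.1 ≤ S i) with hr
  -- Hall's condition
  have hall : ∀ A : Finset {x // x ∈ J}, A.card ≤ (A.biUnion r).card := by
    intro A
    rcases A.eq_empty_or_nonempty with rfl | hAne
    · simp
    set NA : ℝ → ℕ := fun x => (A.filter fun j => b j.1 ≤ x).card with hNAdef
    have hbinj : ∀ j ∈ A, ∀ j' ∈ A, b j.1 = b j'.1 → j = j' := by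
      intro j _ j' _ hbb
      by_contra hne
      have hjj : (j.1 : ℕ) ≠ (j'.1 : ℕ) := fun h => hne (Subtype.ext h)
      have hd := hdisj hjj
      rw [Function.onFun] at hd
      have hmaxlt : max (a j.1) (a j'.1) < b j.1 := max_lt (hab j.1) (hbb ▸ hab j'.1)
      set x := (max (a j.1) (a j'.1) + b j.1)/2 with hx
      have hx1 : x ∈ Set.Ioo (a j.1) (b j.1) := by
        constructor
        · have := le_max_left (a j.1) (a j'.1); rw [hx]; linarith
        · rw [hx]; linarith
      have hx2 : x ∈ Set.Ioo (a j'.1) (b j'.1) := by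
        constructor
        · have := le_max_right (a j.1) (a j'.1); rw [hx]; linarith
        · rw [hx, ← hbb]; linarith
      exact Set.disjoint_left.mp hd hx1 hx2
    have hNAmono : ∀ j ∈ A, ∀ j' ∈ A, b j.1 < b j'.1 → NA (b j.1) < NA (b j'.1) := by
      intro j hj j' hj' hlt
      apply Finset.card_lt_card
      rw [Finset.ssubset_iff_of_subset
        (Finset.monotone_filter_right A (fun j₀ _ h => le_trans h (le_of_lt hlt)))]
      exact ⟨j', Finset.mem_filter.mpr ⟨hj', le_refl _⟩,
        fun hmem => absurd (Finset.mem_filter.mp hmem).2 (not_le.mpr hlt)⟩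
    have hNAinj : ∀ j ∈ A, ∀ j' ∈ A, NA (b j.1) = NA (b j'.1) → j = j' := by
      intro j hj j' hj' hN
      rcases lt_trichotomy (b j.1) (b j'.1) with h | h | h
      · exact absurd hN (Nat.ne_of_lt (hNAmono j hj j' hj' h))
      · exact hbinj j hj j' hj' h
      · exact absurd hN.symm (Nat.ne_of_lt (hNAmono j' hj' j hj h))
    have hsubV : insert 0 (A.image fun j => NA (b j.1)) ⊆
        (Finset.range (n+1)).image fun i => NA (S i) := by
      intro x hx
      rcases Finset.mem_insert.mp hx with rfl | hx
      · obtain ⟨j0, hj0A, hj0min⟩ := A.exists_min_image (fun j => b j.1) hAne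
        obtain ⟨i, hin, hSi⟩ := hvisita j0.1 j0.2
        refine Finset.mem_image.mpr ⟨i, Finset.mem_range.mpr (by omega), ?_⟩
        rw [hSi]
        have hemp : (A.filter fun j => b j.1 ≤ a j0.1) = ∅ := by
          rw [Finset.filter_eq_empty_iff]
          intro j hj
          have h1 := hj0min j hj
          have h2 := hab j0.1
          exact not_le.mpr (by linarith)
        simp [hNAdef, hemp]
      · obtain ⟨j, hjA, rfl⟩ := Finset.mem_image.mp hx
        obtain ⟨i, hin, hSi⟩ := hvisitb j.1 j.2
        exact Finset.mem_image.mpr ⟨i, Finset.mem_range.mpr (by omega), by rw [hSi]⟩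
    have hcard1 : A.card + 1 ≤ ((Finset.range (n+1)).image fun i => NA (S i)).card := by
      have h0 : 0 ∉ A.image fun j => NA (b j.1) := by
        rw [Finset.mem_image]
        rintro ⟨j, hj, hj0⟩
        have hmem : j ∈ A.filter fun j₀ => b j₀.1 ≤ b j.1 :=
          Finset.mem_filter.mpr ⟨hj, le_refl _⟩
        have hpos := Finset.card_pos.mpr ⟨j, hmem⟩
        simp only [hNAdef] at hj0
        omega
      have hcardi : (A.image fun j => NA (b j.1)).card = A.card :=
        Finset.card_image_of_injOn fun j hj j' hj' h =>
          hNAinj j (Finset.mem_coe.mp hj) j' (Finset.mem_coe.mp hj') h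
      have hle := Finset.card_le_card hsubV
      rw [Finset.card_insert_of_notMem h0, hcardi] at hle
      omega
    have hchanges : ((Finset.range (n+1)).image fun i => NA (S i)).card ≤
        1 + ((Finset.range n).filter fun i => NA (S i) ≠ NA (S (i+1))).card :=
      image_card_le_changes _ n
    have hsubr : ((Finset.range n).filter fun i => NA (S i) ≠ NA (S (i+1))) ⊆
        A.biUnion r := by
      intro i hi
      obtain ⟨hin, hne⟩ := Finset.mem_filter.mp hi
      have hex : ∃ j ∈ A,
          (S i ≤ a j.1 ∧ b j.1 ≤ S (i+1)) ∨ (S (i+1) ≤ a j.1 ∧ b j.1 ≤ S i) := by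
        by_contra hc
        push_neg at hc
        apply hne
        simp only [hNAdef]
        congr 1
        apply Finset.filter_congr
        intro j hj
        have h1 := (hc j hj).1
        have h2 := (hc j hj).2
        constructor
        · intro hbi
          by_contra hb2
          push_neg at hb2
          have hgapf := hSgap (i+1) j.1
          simp only [Set.mem_Ioo, not_and] at hgapf
          have hle : S (i+1) ≤ a j.1 := not_lt.mp (fun h => hgapf h hb2)
          exact absurd hbi (not_le.mpr (h2 hle))
        · intro hbi
          by_contra hb2
          push_neg at hb2
          have hgapf := hSgap i j.1
          simp only [Set.mem_Ioo, not_and] at hgapf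
          have hle : S i ≤ a j.1 := not_lt.mp (fun h => hgapf h hb2)
          exact absurd hbi (not_le.mpr (h1 hle))
      obtain ⟨j, hjA, hcross⟩ := hex
      refine Finset.mem_biUnion.mpr ⟨j, hjA, ?_⟩
      simp only [hr]
      exact Finset.mem_filter.mpr ⟨hin, hcross⟩
    have hfin := Finset.card_le_card hsubr
    omega
  obtain ⟨F, hFinj, hFr⟩ := (Finset.all_card_le_biUnion_card_iff_exists_injective r).mp hall
  have hFr' : ∀ j : {x // x ∈ J}, F j ∈ Finset.range n ∧
      ((S (F j) ≤ a j.1 ∧ b j.1 ≤ S (F j + 1)) ∨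
       (S (F j + 1) ≤ a j.1 ∧ b j.1 ≤ S (F j))) := by
    intro j
    have h := hFr j
    simp only [hr] at h
    exact Finset.mem_filter.mp h
  have key : ∀ j : {x // x ∈ J}, ENNReal.ofReal ((b j.1 - a j.1) ^ β) ≤
      ENNReal.ofReal (|S (F j + 1) - S (F j)| ^ β) := by
    intro j
    have hba : b j.1 - a j.1 ≤ |S (F j + 1) - S (F j)| := by
      rcases (hFr' j).2 with ⟨hc1, hc2⟩ | ⟨hc1, hc2⟩
      · have := le_abs_self (S (F j + 1) - S (F j))
        linarith
      · have := abs_sub_comm (S (F j + 1)) (S (F j))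
        have := le_abs_self (S (F j) - S (F j + 1))
        linarith
    exact ENNReal.ofReal_le_ofReal
      (Real.rpow_le_rpow (by linarith [hab j.1]) hba (le_of_lt hβ0))
  calc ∑ j ∈ J, ENNReal.ofReal ((b j - a j) ^ β)
      = ∑ j ∈ J.attach, ENNReal.ofReal ((b j.1 - a j.1) ^ β) :=
        (Finset.sum_attach J fun j => ENNReal.ofReal ((b j - a j) ^ β)).symm
    _ ≤ ∑ j ∈ J.attach, ENNReal.ofReal (|S (F j + 1) - S (F j)| ^ β) :=
        Finset.sum_le_sum fun j _ => key j
    _ = ∑ i ∈ J.attach.image F, ENNReal.ofReal (|S (i + 1) - S i| ^ β) :=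
        (Finset.sum_image (f := fun i => ENNReal.ofReal (|S (i + 1) - S i| ^ β))
          (fun x _ y _ h => hFinj h)).symm
    _ ≤ ∑ i ∈ Finset.range n, ENNReal.ofReal (|S (i + 1) - S i| ^ β) := by
        apply Finset.sum_le_sum_of_subset
        intro i hi
        obtain ⟨j, _, rfl⟩ := Finset.mem_image.mp hi
        exact (hFr' j).1
    _ = ∑ i ∈ Finset.range n, edist (γ (τ (i+1))) (γ (τ i)) := by
        refine Finset.sum_congr rfl fun i _ => ?_
        rw [hγS (i+1), hγS i, edist_dist, he _ (hS (i+1)).1 _ (hS i).1]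
    _ ≤ eVariationOn γ (Set.Icc c d) := eVariationOn.sum_le (f := γ) (n := n) hτmono hτmem
    _ = ENNReal.ofReal L := hlen
end

section
/- For α ≥ 1, the curve γ : (0, 1/2] → ℝ² given by γ(t) = (t, −t^α / log t + a) (for any fixed a ∈ ℝ) has infinite length with respect to the Grushin metric d_α; that is, ∫_0^{1/2} √(1 + t^{−2α}( t^{α−1}/log² t − α t^{α−1}/log t )²) dt = ∞. -/
open MeasureTheory Real Set
open Filter Topology

lemma aux_not_int : ¬ IntegrableOn (fun t : ℝ => (t * (-Real.log t))⁻¹) (Set.Ioc 0 (1/2)) := by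
  have hl : Set.Ioc (0:ℝ) (1/2) ∈ 𝓝[>] (0:ℝ) :=
    Ioc_mem_nhdsGT_of_mem ⟨le_refl _, by norm_num⟩
  refine not_integrableOn_of_tendsto_norm_atTop_of_deriv_isBigO_filter
    (f := fun t : ℝ => Real.log (-Real.log t)) (𝓝[>] (0:ℝ)) hl ?_ ?_ ?_
  · filter_upwards [Ioc_mem_nhdsGT_of_mem (Set.left_mem_Ico.2 (by norm_num : (0:ℝ) < 1/2))]
      with t ht
    have ht0 : (0:ℝ) < t := ht.1
    have hlt : Real.log t < 0 := Real.log_neg ht0 (by linarith [ht.2])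
    exact ((Real.hasDerivAt_log (by linarith : -Real.log t ≠ 0)).comp t
      ((Real.hasDerivAt_log ht0.ne').neg)).differentiableAt
  · have h1 : Tendsto (fun t : ℝ => -Real.log t) (𝓝[>] 0) atTop :=
      tendsto_neg_atBot_atTop.comp Real.tendsto_log_nhdsGT_zero
    exact tendsto_abs_atTop_atTop.comp (Real.tendsto_log_atTop.comp h1)
  · rw [Asymptotics.isBigO_iff]
    refine ⟨1, ?_⟩
    filter_upwards [Ioc_mem_nhdsGT_of_mem (Set.left_mem_Ico.2 (by norm_num : (0:ℝ) < 1/2))]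
      with t ht
    have ht0 : (0:ℝ) < t := ht.1
    have hlt : Real.log t < 0 := Real.log_neg ht0 (by linarith [ht.2])
    have hd : HasDerivAt (fun t : ℝ => Real.log (-Real.log t))
        ((-Real.log t)⁻¹ * (-t⁻¹)) t := by
      have := (Real.hasDerivAt_log (by linarith : -Real.log t ≠ 0)).comp t
        ((Real.hasDerivAt_log ht0.ne').neg)
      exact this
    rw [hd.deriv]
    rw [one_mul]
    have he : (-Real.log t)⁻¹ * -t⁻¹ = -((t * -Real.log t)⁻¹) := by
      rw [mul_inv]; ring
    rw [Real.norm_eq_abs, Real.norm_eq_abs, he, abs_neg]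

lemma aux_bound (α t : ℝ) (hα : 1 ≤ α) (ht : t ∈ Set.Ioc (0:ℝ) (1/2)) :
    (t * (-Real.log t))⁻¹ ≤ Real.sqrt (1 + t ^ (-(2 * α)) *
      (t ^ (α - 1) / (Real.log t) ^ 2 - α * t ^ (α - 1) / Real.log t) ^ 2) := by
  have ht0 : (0:ℝ) < t := ht.1
  have hlt : Real.log t < 0 := Real.log_neg ht0 (by linarith [ht.2])
  set L := Real.log t with hLdef
  have hnL : (0:ℝ) < -L := by linarith
  have hL2 : (0:ℝ) < L ^ 2 := by nlinarith
  have hx : (0:ℝ) < (t * -L)⁻¹ := by positivity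
  have h6 : (1:ℝ) / -L ≤ α / -L := by gcongr
  have e6 : α / -L = -(α / L) := by rw [div_neg]
  have h7 : (0:ℝ) ≤ 1 / L ^ 2 := by positivity
  have hkey2 : (1:ℝ) / -L ≤ 1 / L ^ 2 - α / L := by linarith
  have key : ((t * -L)⁻¹) ^ 2 ≤ 1 + t ^ (-(2 * α)) *
      (t ^ (α - 1) / L ^ 2 - α * t ^ (α - 1) / L) ^ 2 := by
    have h1 : t ^ (-(2*α)) = (t ^ (-α)) ^ 2 := by
      rw [← Real.rpow_natCast (t ^ (-α)) 2, ← Real.rpow_mul ht0.le]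
      norm_num; ring_nf
    have h2 : t ^ (α - 1) / L ^ 2 - α * t ^ (α - 1) / L
        = t ^ (α - 1) * (1 / L ^ 2 - α / L) := by ring
    have h3 : t ^ (-α) * t ^ (α - 1) = t⁻¹ := by
      rw [← Real.rpow_add ht0, ← Real.rpow_neg_one t]
      ring_nf
    have h4 : (0:ℝ) < 1 / L ^ 2 - α / L := lt_of_lt_of_le (by positivity) hkey2
    have h5 : (t * -L)⁻¹ ≤ t⁻¹ * (1 / L ^ 2 - α / L) := by
      have e1 : (t * -L)⁻¹ = t⁻¹ * (1 / -L) := by rw [mul_inv]; ring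
      rw [e1]
      exact mul_le_mul_of_nonneg_left hkey2 (by positivity)
    calc ((t * -L)⁻¹) ^ 2 ≤ (t⁻¹ * (1 / L ^ 2 - α / L)) ^ 2 := by
          apply sq_le_sq' <;> nlinarith
      _ = t ^ (-(2*α)) * (t ^ (α - 1) / L ^ 2 - α * t ^ (α - 1) / L) ^ 2 := by
          rw [h1, h2, ← h3]; ring
      _ ≤ 1 + _ := by linarith
  calc (t * -L)⁻¹ = Real.sqrt (((t * -L)⁻¹) ^ 2) := (Real.sqrt_sq hx.le).symm
    _ ≤ _ := Real.sqrt_le_sqrt key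

/-- For `α ≥ 1`, the Grushin length of the curve `t ↦ (t, −t^α/log t + a)` on
`(0,1/2]` is infinite:
`∫₀^{1/2} √(1 + t^{−2α}(t^{α−1}/log²t − α t^{α−1}/log t)²) dt = ∞`. -/
theorem stmt_10 (α : ℝ) (hα : 1 ≤ α) :
    ∫⁻ t in Set.Ioc (0 : ℝ) (1 / 2),
      ENNReal.ofReal (Real.sqrt (1 + t ^ (-(2 * α)) *
        (t ^ (α - 1) / (Real.log t) ^ 2 - α * t ^ (α - 1) / Real.log t) ^ 2)) = ⊤ := by
  by_contra h
  set F : ℝ → ℝ := fun t => Real.sqrt (1 + t ^ (-(2 * α)) *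
      (t ^ (α - 1) / (Real.log t) ^ 2 - α * t ^ (α - 1) / Real.log t) ^ 2) with hF
  have hmeas : Measurable F := by
    unfold F
    apply Real.continuous_sqrt.measurable.comp
    apply Measurable.add measurable_const
    exact ((measurable_id.pow measurable_const).mul
      ((((measurable_id.pow measurable_const).div (Real.measurable_log.pow_const 2)).sub
        ((measurable_const.mul (measurable_id.pow measurable_const)).div
          Real.measurable_log)).pow_const 2))
  have hint : IntegrableOn F (Set.Ioc 0 (1/2)) := by
    refine ⟨hmeas.aestronglyMeasurable, ?_⟩
    rw [HasFiniteIntegral]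
    have : ∀ a : ℝ, ‖F a‖ₑ = ENNReal.ofReal (F a) := fun a =>
      (Real.enorm_eq_ofReal (Real.sqrt_nonneg _))
    simp_rw [this]
    exact lt_top_iff_ne_top.2 h
  have hg_int : IntegrableOn (fun t : ℝ => (t * (-Real.log t))⁻¹) (Set.Ioc 0 (1/2)) := by
    refine hint.mono' ?_ ?_
    · exact (Measurable.aestronglyMeasurable ((measurable_id.mul Real.measurable_log.neg).inv))
    · rw [ae_restrict_iff' measurableSet_Ioc]
      filter_upwards with t ht
      have ht0 : (0:ℝ) < t := ht.1
      have hlt : Real.log t < 0 := Real.log_neg ht0 (by linarith [ht.2])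
      have hnL : (0:ℝ) < -Real.log t := by linarith
      have hpos : (0:ℝ) < (t * -Real.log t)⁻¹ := by positivity
      rw [Real.norm_eq_abs, abs_of_pos hpos]
      exact aux_bound α t hα ht
  exact aux_not_int hg_int
end
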